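/- arXiv:1609.09368 — 3 statements merged into one kernel-verified Lean document; each statement's English description precedes it below -/
import Mathlib

section
/- Let λ, μ, α, θ > 0, let n₀, N, K be natural numbers with n₀ ≤ N ≤ K. Define the sequence b : ℕ → ℝ backwards by b(K) = λ / (n₀μ + (N - n₀)α + (K - n₀)θ) and, for n₀ + 1 ≤ j ≤ K - 1, b(j) = λ / (λ + n₀μ + min(j - n₀, N - n₀)·α + (j - n₀)θ − (n₀μ + (j + 1 − n₀)θ)·b(j+1)). Then for every j with n₀ + 1 ≤ j ≤ K, we have 0 < b(j) ≤ λ / (n₀μ + min(j − n₀, N − n₀)·α + (j − n₀)θ); in particular the denominator in the recursion is positive, so b is well defined. -/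
/-- Backward recursion coefficients `b^{(0)}_j` for the level-0 stationary
probabilities of the M/M/N/K setup queue with abandonments: positivity and
upper bound. -/
theorem stmt_0 (lam mu alpha th : ℝ) (hlam : 0 < lam) (hmu : 0 < mu)
    (halpha : 0 < alpha) (hth : 0 < th)
    (n0 N K : ℕ) (hn0N : n0 ≤ N) (hNK : N ≤ K)
    (b : ℕ → ℝ)
    (hbK : b K = lam / (n0 * mu + ((N : ℝ) - n0) * alpha + ((K : ℝ) - n0) * th))
    (hbrec : ∀ j : ℕ, n0 + 1 ≤ j → j < K →
      b j = lam / (lam + n0 * mu + min ((j : ℝ) - n0) ((N : ℝ) - n0) * alpha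
        + ((j : ℝ) - n0) * th - (n0 * mu + ((j : ℝ) + 1 - n0) * th) * b (j + 1))) :
    ∀ j : ℕ, n0 + 1 ≤ j → j ≤ K →
      0 < b j ∧
      b j ≤ lam / (n0 * mu + min ((j : ℝ) - n0) ((N : ℝ) - n0) * alpha
        + ((j : ℝ) - n0) * th) := by
  have hn0N' : (n0 : ℝ) ≤ N := by exact_mod_cast hn0N
  have key : ∀ d j : ℕ, K - j = d → n0 + 1 ≤ j → j ≤ K →
      0 < b j ∧ b j ≤ lam / (n0 * mu + min ((j : ℝ) - n0) ((N : ℝ) - n0) * alpha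
        + ((j : ℝ) - n0) * th) := by
    intro d
    induction d with
    | zero =>
      intro j hd hj hjK
      have hjK' : j = K := by omega
      subst hjK'
      have hNj : (N : ℝ) ≤ j := by exact_mod_cast hNK
      have hmin : min ((j : ℝ) - n0) ((N : ℝ) - n0) = (N : ℝ) - n0 :=
        min_eq_right (by linarith)
      have hjn : (1 : ℝ) ≤ (j : ℝ) - n0 := by
        have : (n0 : ℝ) + 1 ≤ j := by exact_mod_cast hj
        linarith
      have hD : 0 < (n0 : ℝ) * mu + ((N : ℝ) - n0) * alpha + ((j : ℝ) - n0) * th := by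
        have h1 : 0 ≤ (n0 : ℝ) * mu := by positivity
        have h2 : 0 ≤ ((N : ℝ) - n0) * alpha := mul_nonneg (by linarith) halpha.le
        nlinarith
      rw [hmin, hbK]
      exact ⟨div_pos hlam hD, le_refl _⟩
    | succ d ih =>
      intro j hd hj hjK
      have hjK' : j < K := by omega
      obtain ⟨ih1, ih2⟩ := ih (j + 1) (by omega) (by omega) (by omega)
      push_cast at ih2
      have hjn : (1 : ℝ) ≤ (j : ℝ) - n0 := by
        have : (n0 : ℝ) + 1 ≤ j := by exact_mod_cast hj
        linarith
      set m1 : ℝ := min ((j : ℝ) + 1 - n0) ((N : ℝ) - n0) with hm1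
      set m0 : ℝ := min ((j : ℝ) - n0) ((N : ℝ) - n0) with hm0
      have hm1nn : 0 ≤ m1 := le_min (by linarith) (by linarith)
      have hm0nn : 0 ≤ m0 := le_min (by linarith) (by linarith)
      set D1 : ℝ := n0 * mu + m1 * alpha + ((j : ℝ) + 1 - n0) * th with hD1def
      set c : ℝ := n0 * mu + ((j : ℝ) + 1 - n0) * th with hcdef
      have hc0 : 0 < c := by
        have h1 : 0 ≤ (n0 : ℝ) * mu := by positivity
        nlinarith
      have hcD : c ≤ D1 := by nlinarith
      have hD1 : 0 < D1 := lt_of_lt_of_le hc0 hcD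
      have hb1 : b (j + 1) * D1 ≤ lam := (le_div_iff₀ hD1).mp ih2
      have hcb : c * b (j + 1) ≤ lam := by nlinarith
      set Dj : ℝ := n0 * mu + m0 * alpha + ((j : ℝ) - n0) * th with hDjdef
      have hDj : 0 < Dj := by
        have h1 : 0 ≤ (n0 : ℝ) * mu := by positivity
        nlinarith
      have hdenom : Dj ≤ lam + n0 * mu + m0 * alpha + ((j : ℝ) - n0) * th
          - (n0 * mu + ((j : ℝ) + 1 - n0) * th) * b (j + 1) := by
        have : (n0 * mu + ((j : ℝ) + 1 - n0) * th) * b (j + 1) = c * b (j + 1) := by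
          rw [hcdef]
        rw [this]
        linarith
      rw [hbrec j hj hjK']
      refine ⟨div_pos hlam (lt_of_lt_of_le hDj hdenom), ?_⟩
      exact div_le_div_of_nonneg_left hlam.le hDj hdenom
  intro j hj hjK
  exact key (K - j) j rfl hj hjK
end

section
/- Fix reals λ, μ, θ > 0 and natural numbers n_k ≤ K. Define b : ℕ → ℝ backwards by b(K) = λ / (n_kμ + (K − n_k)θ) and, for n_k + 1 ≤ j ≤ K − 1, b(j) = λ / (λ + n_kμ + (j − n_k)θ − (n_kμ + (j + 1 − n_k)θ)·b(j+1)). Then for every j with n_k + 1 ≤ j ≤ K, we have 0 < b(j) ≤ λ / (n_kμ + (j − n_k)θ). -/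
/-- Theorem 3 (b-coefficient part): bounds for the backward-recursion
coefficients `b^{(k)}_j` at the top level of the Markov chain (all VNF
instances on, no setup terms). -/
theorem stmt_3 (lam mu th : ℝ) (hlam : 0 < lam) (hmu : 0 < mu) (hth : 0 < th)
    (nk K : ℕ) (hnkK : nk ≤ K)
    (b : ℕ → ℝ)
    (hbK : b K = lam / (nk * mu + ((K : ℝ) - nk) * th))
    (hbrec : ∀ j : ℕ, nk + 1 ≤ j → j < K →
      b j = lam / (lam + nk * mu + ((j : ℝ) - nk) * th
        - (nk * mu + ((j : ℝ) + 1 - nk) * th) * b (j + 1))) :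
    ∀ j : ℕ, nk + 1 ≤ j → j ≤ K →
      0 < b j ∧ b j ≤ lam / (nk * mu + ((j : ℝ) - nk) * th) := by
  have hD : ∀ j : ℕ, nk + 1 ≤ j → 0 < nk * mu + ((j : ℝ) - nk) * th := by
    intro j hj
    have h1 : (1 : ℝ) ≤ (j : ℝ) - nk := by
      have : ((nk + 1 : ℕ) : ℝ) ≤ (j : ℝ) := by exact_mod_cast Nat.cast_le.mpr hj
      push_cast at this; linarith
    have : (0 : ℝ) ≤ (nk : ℝ) * mu := by positivity
    nlinarith
  have key : ∀ d j : ℕ, nk + 1 ≤ j → j ≤ K → K - j ≤ d →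
      0 < b j ∧ b j ≤ lam / (nk * mu + ((j : ℝ) - nk) * th) := by
    intro d
    induction d with
    | zero =>
      intro j hj1 hjK hd
      have hjK' : j = K := le_antisymm hjK (by omega)
      subst hjK'
      rw [hbK]
      exact ⟨div_pos hlam (hD _ hj1), le_refl _⟩
    | succ d ih =>
      intro j hj1 hjK hd
      rcases eq_or_lt_of_le hjK with hEq | hLt
      · subst hEq
        rw [hbK]
        exact ⟨div_pos hlam (hD _ hj1), le_refl _⟩
      · have hstep := ih (j + 1) (by omega) (by omega) (by omega)
        obtain ⟨hpos1, hle1⟩ := hstep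
        have hD1 : 0 < nk * mu + ((j : ℝ) + 1 - nk) * th := by
          have := hD (j + 1) (by omega)
          push_cast at this; linarith
        have hDj : 0 < nk * mu + ((j : ℝ) - nk) * th := hD j hj1
        have hle1' : b (j + 1) ≤ lam / (nk * mu + ((j : ℝ) + 1 - nk) * th) := by
          have := hle1; push_cast at this ⊢; linarith
        have hprod : (nk * mu + ((j : ℝ) + 1 - nk) * th) * b (j + 1) ≤ lam := by
          have := (le_div_iff₀ hD1).mp hle1'
          linarith [mul_comm (b (j + 1)) (nk * mu + ((j : ℝ) + 1 - nk) * th)]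
        have hdenom : nk * mu + ((j : ℝ) - nk) * th ≤
            lam + nk * mu + ((j : ℝ) - nk) * th
              - (nk * mu + ((j : ℝ) + 1 - nk) * th) * b (j + 1) := by linarith
        have hdpos : 0 < lam + nk * mu + ((j : ℝ) - nk) * th
            - (nk * mu + ((j : ℝ) + 1 - nk) * th) * b (j + 1) := lt_of_lt_of_le hDj hdenom
        rw [hbrec j hj1 hLt]
        constructor
        · exact div_pos hlam hdpos
        · exact div_le_div_of_nonneg_left hlam.le hDj hdenom
  intro j hj1 hjK
  exact key (K - j) j hj1 hjK le_rfl
end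

section
/- Let λ, μ, θ > 0, n_k ≤ K natural numbers, and let (π_j) be nonnegative reals. Define a, b : ℕ → ℝ backwards by a(K) = α·π_K / (n_kμ + (K − n_k)θ), b(K) = λ / (n_kμ + (K − n_k)θ) (for a fixed α > 0 and constant c_j ≥ 0 multiplying π_j), and for n_k + 1 ≤ j ≤ K − 1: a(j) = ((n_kμ + (j + 1 − n_k)θ)·a(j+1) + c_j·π_j) / D(j), b(j) = λ / D(j), where D(j) = λ + n_kμ + (j − n_k)θ − (n_kμ + (j + 1 − n_k)θ)·b(j+1). Then a(j) ≥ 0 for all n_k + 1 ≤ j ≤ K. -/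
/-- Theorem 3 (a-coefficient part): nonnegativity of the inhomogeneous
coefficients `a^{(k)}_j` in the backward recursion at the top level of the
Markov chain of the M/M/N/K setup queue with abandonments. -/
theorem stmt_4 (lam mu th alpha : ℝ) (hlam : 0 < lam) (hmu : 0 < mu)
    (hth : 0 < th) (halpha : 0 < alpha)
    (nk K : ℕ) (hnkK : nk ≤ K)
    (pi : ℕ → ℝ) (hpi : ∀ j, 0 ≤ pi j)
    (c : ℕ → ℝ) (hc : ∀ j, 0 ≤ c j)
    (a b : ℕ → ℝ)
    (haK : a K = alpha * pi K / (nk * mu + ((K : ℝ) - nk) * th))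
    (hbK : b K = lam / (nk * mu + ((K : ℝ) - nk) * th))
    (harec : ∀ j : ℕ, nk + 1 ≤ j → j < K →
      a j = ((nk * mu + ((j : ℝ) + 1 - nk) * th) * a (j + 1) + c j * pi j) /
        (lam + nk * mu + ((j : ℝ) - nk) * th
          - (nk * mu + ((j : ℝ) + 1 - nk) * th) * b (j + 1)))
    (hbrec : ∀ j : ℕ, nk + 1 ≤ j → j < K →
      b j = lam / (lam + nk * mu + ((j : ℝ) - nk) * th
        - (nk * mu + ((j : ℝ) + 1 - nk) * th) * b (j + 1))) :
    ∀ j : ℕ, nk + 1 ≤ j → j ≤ K → 0 ≤ a j := by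
  have hMpos : ∀ j : ℕ, nk + 1 ≤ j → 0 < nk * mu + ((j : ℝ) - nk) * th := by
    intro j hj
    have hjc : (nk : ℝ) + 1 ≤ (j : ℝ) := by exact_mod_cast hj
    have hnk0 : (0 : ℝ) ≤ (nk : ℝ) := Nat.cast_nonneg nk
    nlinarith
  have key : ∀ d j, j + d = K → nk + 1 ≤ j →
      0 ≤ a j ∧ (nk * mu + ((j : ℝ) - nk) * th) * b j ≤ lam := by
    intro d
    induction d with
    | zero =>
      intro j hjK hj
      simp at hjK
      subst hjK
      have hM := hMpos j hj
      constructor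
      · rw [haK]
        exact div_nonneg (by nlinarith [hpi j]) hM.le
      · rw [hbK, mul_comm, div_mul_cancel₀ _ hM.ne']
    | succ d ih =>
      intro j hjK hj
      have hjK' : j < K := by omega
      obtain ⟨ha1, hb1⟩ := ih (j + 1) (by omega) (by omega)
      have hM := hMpos j hj
      have hM1 := hMpos (j + 1) (by omega)
      push_cast at hb1 hM1
      have hD : 0 < lam + nk * mu + ((j : ℝ) - nk) * th
          - (nk * mu + ((j : ℝ) + 1 - nk) * th) * b (j + 1) := by
        nlinarith
      constructor
      · rw [harec j hj hjK']
        have hnum : 0 ≤ (nk * mu + ((j : ℝ) + 1 - nk) * th) * a (j + 1) + c j * pi j := by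
          have := hc j; have := hpi j
          have h1 : 0 ≤ (nk * mu + ((j : ℝ) + 1 - nk) * th) * a (j + 1) := by
            apply mul_nonneg (le_of_lt _) ha1; nlinarith
          nlinarith
        positivity
      · rw [hbrec j hj hjK']
        rw [mul_comm, div_mul_eq_mul_div, div_le_iff₀ hD]
        nlinarith
  intro j hj hjK
  exact (key (K - j) j (by omega) hj).1
end
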